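/- Let (𝒳, Σ) be a measurable space with a probability measure μ, let E ⊆ 𝒳 be a measurable set, and let y, y_ξ : 𝒳 → ℝ be measurable functions that are integrable with respect to μ. Suppose there is a constant C̃ with 0 ≤ C̃ < 1 such that |∫_{𝒳∖E} (y − y_ξ) dμ| ≤ C̃ · |∫_E (y − y_ξ) dμ| (the signed data-consistency condition). Then W₁(y♯μ, y_ξ♯μ) ≥ (1 − C̃) · |∫_E (y − y_ξ) dμ|. -/

import Mathlib

open MeasureTheory
open scoped ENNReal

/-- A coupling of two probability measures on `ℝ` is a measure on `ℝ × ℝ`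
whose first marginal is `ν₁` and whose second marginal is `ν₂`. -/
def IsCoupling (γ : Measure (ℝ × ℝ)) (ν₁ ν₂ : Measure ℝ) : Prop :=
  γ.map Prod.fst = ν₁ ∧ γ.map Prod.snd = ν₂

/-- The 1-Wasserstein distance between two measures on `ℝ`:
the infimum over all couplings `γ` of `∫ |a - b| dγ(a, b)`. -/
noncomputable def W1 (ν₁ ν₂ : Measure ℝ) : ℝ≥0∞ :=
  ⨅ (γ : Measure (ℝ × ℝ)) (_ : IsCoupling γ ν₁ ν₂), ∫⁻ q, edist q.1 q.2 ∂γ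

/-- Lower bound on the 1-Wasserstein distance for a data-consistent estimator
(signed sense). -/
theorem w1_lower_bound_data_consistent
    {𝒳 : Type*} [MeasurableSpace 𝒳] (μ : Measure 𝒳) [IsProbabilityMeasure μ]
    (E : Set 𝒳) (hE : MeasurableSet E)
    (y yξ : 𝒳 → ℝ) (hy : Measurable y) (hyξ : Measurable yξ)
    (hiy : Integrable y μ) (hiyξ : Integrable yξ μ)
    (C : ℝ) (hC0 : 0 ≤ C) (hC1 : C < 1)
    (hdc : |∫ x in Eᶜ, (y x - yξ x) ∂μ| ≤ C * |∫ x in E, (y x - yξ x) ∂μ|) :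
    ENNReal.ofReal ((1 - C) * |∫ x in E, (y x - yξ x) ∂μ|) ≤
      W1 (μ.map y) (μ.map yξ) := by
  set d := ∫ x in E, (y x - yξ x) ∂μ with hd
  have hsub : Integrable (fun x => y x - yξ x) μ := hiy.sub hiyξ
  have hsplit : ∫ x, (y x - yξ x) ∂μ = d + ∫ x in Eᶜ, (y x - yξ x) ∂μ :=
    (integral_add_compl hE hsub).symm
  have hlb : (1 - C) * |d| ≤ |∫ x, (y x - yξ x) ∂μ| := by
    rw [hsplit]
    have h1 : |d| - |∫ x in Eᶜ, (y x - yξ x) ∂μ| ≤ |d + ∫ x in Eᶜ, (y x - yξ x) ∂μ| := by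
      have := abs_add_le (d + ∫ x in Eᶜ, (y x - yξ x) ∂μ) (-(∫ x in Eᶜ, (y x - yξ x) ∂μ))
      simp at this
      linarith [this]
    nlinarith [abs_nonneg d]
  refine le_iInf fun γ => le_iInf fun hγ => ?_
  obtain ⟨h1, h2⟩ := hγ
  by_cases htop : ∫⁻ q, edist q.1 q.2 ∂γ = ⊤
  · simp [htop]
  have hedist : ∀ q : ℝ × ℝ, edist q.1 q.2 = (‖q.1 - q.2‖₊ : ℝ≥0∞) := fun q =>
    edist_eq_enorm_sub q.1 q.2
  have hIsub : Integrable (fun q : ℝ × ℝ => q.1 - q.2) γ := by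
    refine ⟨(measurable_fst.sub measurable_snd).aestronglyMeasurable, ?_⟩
    rw [HasFiniteIntegral]
    simpa [hedist, enorm_eq_nnnorm] using Ne.lt_top htop
  have hIsnd : Integrable (fun q : ℝ × ℝ => q.2) γ := by
    have hid : Integrable id (μ.map yξ) :=
      (integrable_map_measure aestronglyMeasurable_id hyξ.aemeasurable).mpr hiyξ
    rw [← h2] at hid
    exact (integrable_map_measure aestronglyMeasurable_id
      measurable_snd.aemeasurable).mp hid
  have hIfst : Integrable (fun q : ℝ × ℝ => q.1) γ := by
    have h := hIsub.add hIsnd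
    have : ((fun q : ℝ × ℝ => q.1 - q.2) + fun q : ℝ × ℝ => q.2) = fun q : ℝ × ℝ => q.1 := by
      funext q; simp
    rwa [this] at h
  have hint1 : ∫ q : ℝ × ℝ, q.1 ∂γ = ∫ x, y x ∂μ := by
    have e1 : ∫ q : ℝ × ℝ, q.1 ∂γ = ∫ a, id a ∂(γ.map Prod.fst) :=
      (integral_map measurable_fst.aemeasurable aestronglyMeasurable_id).symm
    rw [e1, h1, integral_map hy.aemeasurable aestronglyMeasurable_id]
    rfl
  have hint2 : ∫ q : ℝ × ℝ, q.2 ∂γ = ∫ x, yξ x ∂μ := by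
    have e1 : ∫ q : ℝ × ℝ, q.2 ∂γ = ∫ a, id a ∂(γ.map Prod.snd) :=
      (integral_map measurable_snd.aemeasurable aestronglyMeasurable_id).symm
    rw [e1, h2, integral_map hyξ.aemeasurable aestronglyMeasurable_id]
    rfl
  have hkey : ∫ q : ℝ × ℝ, (q.1 - q.2) ∂γ = ∫ x, (y x - yξ x) ∂μ := by
    rw [integral_sub hIfst hIsnd, hint1, hint2, integral_sub hiy hiyξ]
  have hb : ENNReal.ofReal |∫ x, (y x - yξ x) ∂μ| ≤ ∫⁻ q, edist q.1 q.2 ∂γ := by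
    rw [← hkey]
    have := enorm_integral_le_lintegral_enorm (μ := γ) (fun q : ℝ × ℝ => q.1 - q.2)
    simpa [edist_eq_enorm_sub, Real.nnnorm_abs, ← ofReal_norm, Real.norm_eq_abs] using this
  refine le_trans ?_ hb
  exact ENNReal.ofReal_le_ofReal hlb
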